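/- Let ν be a product measure on {0,1}^m given by ν(η) ∝ Π W_i^{η_i} with all W_i > 0. Then ν has the normalized matching property: for l ≥ k (with both levels of positive probability), the conditional measure ν(· | Ση_i = l) stochastically dominates ν(· | Ση_i = k), i.e., for every increasing event A, ν(A | Ση_i = l) ≥ ν(A | Ση_i = k). -/
import Mathlib


open Finset

/-- The number of coordinates of `η` equal to `true`. -/
def lvl {m : ℕ} (η : Fin m → Bool) : ℕ := (univ.filter fun i => η i = true).card

/-- An event is increasing if it is closed upward in the coordinatewise order. -/
def IncrEvent {m : ℕ} (A : Finset (Fin m → Bool)) : Prop :=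
  ∀ η ∈ A, ∀ τ : Fin m → Bool, (∀ i, η i = true → τ i = true) → τ ∈ A

/-- Unnormalized weight of the product measure `ν(η) ∝ ∏ W i ^ η i`. -/
def prodWt {m : ℕ} (W : Fin m → ℝ) (η : Fin m → Bool) : ℝ :=
  ∏ i, if η i = true then W i else 1

namespace NMaux

/-- Weight of the part of `A` at level `j`. -/
def SA (m : ℕ) (W : Fin m → ℝ) (A : Finset (Fin m → Bool)) (j : ℕ) : ℝ :=
  ∑ η ∈ A, if lvl η = j then prodWt W η else 0

/-- Slice of an event by the value of the first coordinate. -/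
def slice {m : ℕ} (b : Bool) (A : Finset (Fin (m+1) → Bool)) : Finset (Fin m → Bool) :=
  univ.filter fun ξ => Fin.cons b ξ ∈ A

lemma mem_slice {m : ℕ} (b : Bool) (A : Finset (Fin (m+1) → Bool)) (ξ : Fin m → Bool) :
    ξ ∈ slice b A ↔ Fin.cons b ξ ∈ A := by simp [slice]

lemma prodWt_pos {m : ℕ} {W : Fin m → ℝ} (hW : ∀ i, 0 < W i) (η : Fin m → Bool) :
    0 < prodWt W η := by
  apply Finset.prod_pos
  intro i _
  by_cases h : η i = true <;> simp [h, hW i]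

lemma SA_nonneg {m : ℕ} {W : Fin m → ℝ} (hW : ∀ i, 0 < W i) (A : Finset (Fin m → Bool))
    (j : ℕ) : 0 ≤ SA m W A j := by
  apply Finset.sum_nonneg
  intro η _
  split
  · exact (prodWt_pos hW η).le
  · exact le_refl _

lemma SA_mono_set {m : ℕ} {W : Fin m → ℝ} (hW : ∀ i, 0 < W i)
    {A B : Finset (Fin m → Bool)} (hAB : A ⊆ B) (j : ℕ) : SA m W A j ≤ SA m W B j := by
  apply Finset.sum_le_sum_of_subset_of_nonneg hAB
  intro η _ _
  split
  · exact (prodWt_pos hW η).le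
  · exact le_refl _

lemma lvl_le {m : ℕ} (η : Fin m → Bool) : lvl η ≤ m := by
  simpa [lvl] using (Finset.card_filter_le univ fun i => η i = true)

lemma SA_eq_zero {m : ℕ} (W : Fin m → ℝ) (A : Finset (Fin m → Bool)) {j : ℕ} (h : m < j) :
    SA m W A j = 0 := by
  apply Finset.sum_eq_zero
  intro η _
  have := lvl_le η
  rw [if_neg]
  omega

lemma lvl_cons {m : ℕ} (b : Bool) (ξ : Fin m → Bool) :
    lvl (Fin.cons b ξ) = (if b = true then 1 else 0) + lvl ξ := by
  simp only [lvl, Finset.card_filter]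
  rw [Fin.sum_univ_succ]
  simp

lemma prodWt_cons {m : ℕ} (W : Fin (m+1) → ℝ) (b : Bool) (ξ : Fin m → Bool) :
    prodWt W (Fin.cons b ξ) = (if b = true then W 0 else 1) * prodWt (W ∘ Fin.succ) ξ := by
  simp only [prodWt]
  rw [Fin.prod_univ_succ]
  simp [Function.comp]

lemma sum_cube_succ {m : ℕ} (f : (Fin (m+1) → Bool) → ℝ) :
    ∑ η : Fin (m+1) → Bool, f η = ∑ b : Bool, ∑ ξ : Fin m → Bool, f (Fin.cons b ξ) := by
  rw [← (Fin.consEquiv (fun _ : Fin (m+1) => Bool)).sum_comp]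
  rw [Fintype.sum_prod_type]
  rfl

lemma SA_as_total {m : ℕ} (W : Fin m → ℝ) (A : Finset (Fin m → Bool)) (j : ℕ) :
    SA m W A j = ∑ η : Fin m → Bool, if η ∈ A then (if lvl η = j then prodWt W η else 0) else 0 := by
  rw [SA, Finset.sum_ite_mem]
  simp

lemma SA_decomp_zero {m : ℕ} (W : Fin (m+1) → ℝ) (A : Finset (Fin (m+1) → Bool)) :
    SA (m+1) W A 0 = SA m (W ∘ Fin.succ) (slice false A) 0 := by
  rw [SA_as_total, SA_as_total, sum_cube_succ]
  simp only [Fintype.sum_bool, lvl_cons, prodWt_cons, mem_slice]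
  simp

lemma SA_decomp_succ {m : ℕ} (W : Fin (m+1) → ℝ) (A : Finset (Fin (m+1) → Bool)) (j : ℕ) :
    SA (m+1) W A (j+1) = SA m (W ∘ Fin.succ) (slice false A) (j+1)
      + W 0 * SA m (W ∘ Fin.succ) (slice true A) j := by
  rw [SA_as_total, SA_as_total, SA_as_total, sum_cube_succ]
  simp only [Fintype.sum_bool, lvl_cons, prodWt_cons, mem_slice]
  rw [Finset.mul_sum, add_comm]
  congr 1
  · exact Finset.sum_congr rfl fun ξ _ => by
      by_cases h : Fin.cons false ξ ∈ A <;> simp [h]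
  · exact Finset.sum_congr rfl fun ξ _ => by
      by_cases h : Fin.cons true ξ ∈ A <;> by_cases h2 : lvl ξ = j <;>
        try simp [h, h2, Nat.add_comm 1, mul_comm]

lemma slice_univ {m : ℕ} (b : Bool) :
    slice b (univ : Finset (Fin (m+1) → Bool)) = univ := by
  simp [slice]

lemma hW_succ {m : ℕ} {W : Fin (m+1) → ℝ} (hW : ∀ i, 0 < W i) :
    ∀ i, 0 < (W ∘ Fin.succ) i := fun i => hW i.succ

lemma ST_pos {m : ℕ} {W : Fin m → ℝ} (hW : ∀ i, 0 < W i) {j : ℕ} (hj : j ≤ m) :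
    0 < SA m W univ j := by
  induction m generalizing j with
  | zero =>
    interval_cases j
    simp [SA, lvl, prodWt]
  | succ m ih =>
    cases j with
    | zero =>
      rw [SA_decomp_zero, slice_univ]
      exact ih (hW_succ hW) (Nat.zero_le m)
    | succ i =>
      rw [SA_decomp_succ, slice_univ, slice_univ]
      have h1 : 0 < SA m (W ∘ Fin.succ) univ i := ih (hW_succ hW) (by omega)
      have h2 : 0 ≤ SA m (W ∘ Fin.succ) univ (i+1) := SA_nonneg (hW_succ hW) _ _
      have h3 : 0 < W 0 := hW 0
      nlinarith

lemma ST_logconcave {m : ℕ} {W : Fin m → ℝ} (hW : ∀ i, 0 < W i) (j : ℕ) :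
    SA m W univ j * SA m W univ (j+2) ≤ SA m W univ (j+1) ^ 2 := by
  induction m generalizing j with
  | zero =>
    rw [SA_eq_zero _ _ (by omega : 0 < j + 2), SA_eq_zero _ _ (by omega : 0 < j + 1)]
    simp
  | succ m ih =>
    set W' := W ∘ Fin.succ with hW'def
    have hW' : ∀ i, 0 < W' i := hW_succ hW
    have hw : 0 < W 0 := hW 0
    have hS : ∀ i, 0 ≤ SA m W' univ i := fun i => SA_nonneg hW' _ _
    -- chain lemma
    have chain : ∀ i, SA m W' univ i * SA m W' univ (i+3)
        ≤ SA m W' univ (i+1) * SA m W' univ (i+2) := by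
      intro i
      by_cases hm : i + 2 ≤ m
      · have p1 : 0 < SA m W' univ (i+1) := ST_pos hW' (by omega)
        have p2 : 0 < SA m W' univ (i+2) := ST_pos hW' hm
        have c1 := ih hW' i
        have c2 := ih hW' (i+1)
        have key : (SA m W' univ i * SA m W' univ (i+3)) * (SA m W' univ (i+1) * SA m W' univ (i+2))
            ≤ (SA m W' univ (i+1) * SA m W' univ (i+2)) * (SA m W' univ (i+1) * SA m W' univ (i+2)) := by
          nlinarith [hS i, hS (i+3), mul_nonneg (hS i) (hS (i+2))]
        exact le_of_mul_le_mul_right key (by positivity)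
      · rw [SA_eq_zero _ _ (by omega : m < i + 3), mul_zero]
        exact mul_nonneg (hS _) (hS _)
    cases j with
    | zero =>
      have c1 : SA m W' univ 0 * SA m W' univ 2 ≤ SA m W' univ 1 ^ 2 := ih hW' 0
      have e1 : SA (m+1) W univ (0+2) = SA m W' univ 2 + W 0 * SA m W' univ 1 := by
        rw [show (0+2 : ℕ) = 1+1 from rfl, SA_decomp_succ]
        try simp [slice_univ, ← hW'def]
      have e2 : SA (m+1) W univ (0+1) = SA m W' univ 1 + W 0 * SA m W' univ 0 := by
        rw [SA_decomp_succ]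
        try simp [slice_univ, ← hW'def]
      have e3 : SA (m+1) W univ 0 = SA m W' univ 0 := by
        rw [SA_decomp_zero]
        try simp [slice_univ, ← hW'def]
      rw [e1, e2, e3]
      nlinarith [hS 0, hS 1, hS 2, sq_nonneg (W 0 * SA m W' univ 0),
        mul_nonneg hw.le (mul_nonneg (hS 0) (hS 1))]
    | succ i =>
      have c1 : SA m W' univ i * SA m W' univ (i+2) ≤ SA m W' univ (i+1) ^ 2 := ih hW' i
      have c2 : SA m W' univ (i+1) * SA m W' univ (i+3) ≤ SA m W' univ (i+2) ^ 2 := ih hW' (i+1)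
      have c3 := chain i
      have e1 : SA (m+1) W univ (i+1) = SA m W' univ (i+1) + W 0 * SA m W' univ i := by
        rw [SA_decomp_succ]
        try simp [slice_univ, ← hW'def]
      have e2 : SA (m+1) W univ (i+1+1) = SA m W' univ (i+2) + W 0 * SA m W' univ (i+1) := by
        rw [show i+1+1 = (i+1)+1 from rfl, SA_decomp_succ]
        try simp [slice_univ, ← hW'def]
      have e3 : SA (m+1) W univ (i+1+2) = SA m W' univ (i+3) + W 0 * SA m W' univ (i+2) := by
        rw [show i+1+2 = (i+2)+1 from rfl, SA_decomp_succ]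
        try simp [slice_univ, ← hW'def]
      rw [e1, e2, e3]
      nlinarith [hS i, hS (i+1), hS (i+2), hS (i+3),
        mul_nonneg hw.le (sub_nonneg.mpr c2), mul_nonneg hw.le (sub_nonneg.mpr c3),
        mul_nonneg (mul_nonneg hw.le hw.le) (sub_nonneg.mpr c1)]

lemma slice_incr {m : ℕ} (b : Bool) {A : Finset (Fin (m+1) → Bool)} (hA : IncrEvent A) :
    IncrEvent (slice b A) := by
  intro ξ hξ τ hτ
  rw [mem_slice] at hξ ⊢
  apply hA _ hξ
  intro i
  refine Fin.cases ?_ ?_ i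
  · simp
  · intro i
    simp only [Fin.cons_succ]
    exact hτ i

lemma slice_subset {m : ℕ} {A : Finset (Fin (m+1) → Bool)} (hA : IncrEvent A) :
    slice false A ⊆ slice true A := by
  intro ξ hξ
  rw [mem_slice] at hξ ⊢
  apply hA _ hξ
  intro i
  refine Fin.cases ?_ ?_ i
  · simp
  · intro i
    simp only [Fin.cons_succ]
    exact fun h => h

/-- Cross-multiplied one-step monotonicity. -/
lemma cross_step {m : ℕ} {W : Fin m → ℝ} (hW : ∀ i, 0 < W i)
    {A : Finset (Fin m → Bool)} (hA : IncrEvent A) (s : ℕ) :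
    SA m W A s * SA m W univ (s+1) ≤ SA m W A (s+1) * SA m W univ s := by
  induction m generalizing s with
  | zero =>
    rw [SA_eq_zero _ _ (by omega : 0 < s + 1), mul_zero]
    exact mul_nonneg (SA_nonneg hW _ _) (SA_nonneg hW _ _)
  | succ m ih =>
    by_cases hsm : s + 1 ≤ m + 1
    swap
    · rw [SA_eq_zero W univ (by omega : m + 1 < s + 1), mul_zero]
      exact mul_nonneg (SA_nonneg hW _ _) (SA_nonneg hW _ _)
    set W' := W ∘ Fin.succ with hW'def
    have hW' : ∀ i, 0 < W' i := hW_succ hW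
    have hw : 0 < W 0 := hW 0
    set P := SA m W' (slice false A) with hPdef
    set Q := SA m W' (slice true A) with hQdef
    set S := SA m W' univ with hSdef
    have hP0 : IncrEvent (slice false A) := slice_incr false hA
    have hQ0 : IncrEvent (slice true A) := slice_incr true hA
    have hPQ : ∀ i, P i ≤ Q i := fun i => SA_mono_set hW' (slice_subset hA) i
    have hPn : ∀ i, 0 ≤ P i := fun i => SA_nonneg hW' _ _
    have hQn : ∀ i, 0 ≤ Q i := fun i => SA_nonneg hW' _ _
    have hSn : ∀ i, 0 ≤ S i := fun i => SA_nonneg hW' _ _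
    have cP : ∀ i, P i * S (i+1) ≤ P (i+1) * S i := fun i => ih hW' hP0 i
    have cQ : ∀ i, Q i * S (i+1) ≤ Q (i+1) * S i := fun i => ih hW' hQ0 i
    cases s with
    | zero =>
      -- goal : P 0 * (S 1 + w * S 0) ≤ (P 1 + w * Q 0) * S 0
      have e1 : SA (m+1) W A 0 = P 0 := by
        rw [SA_decomp_zero]
        try simp [← hW'def, ← hPdef]
      have e2 : SA (m+1) W univ (0+1) = S 1 + W 0 * S 0 := by
        rw [SA_decomp_succ]
        try simp [slice_univ, ← hW'def, ← hSdef]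
      have e3 : SA (m+1) W A (0+1) = P 1 + W 0 * Q 0 := by
        rw [SA_decomp_succ]
        try simp [← hW'def, ← hPdef, ← hQdef]
      have e4 : SA (m+1) W univ 0 = S 0 := by
        rw [SA_decomp_zero]
        try simp [slice_univ, ← hW'def, ← hSdef]
      rw [e1, e2, e3, e4]
      have h1 : P 0 * S 1 ≤ P 1 * S 0 := cP 0
      have h2 : P 0 ≤ Q 0 := hPQ 0
      have h3 : 0 ≤ S 0 := hSn 0
      nlinarith [mul_nonneg (mul_nonneg hw.le (sub_nonneg.mpr h2)) h3]
    | succ t =>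
      have e1 : SA (m+1) W A (t+1) = P (t+1) + W 0 * Q t := by
        rw [SA_decomp_succ]
        try simp [← hW'def, ← hPdef, ← hQdef]
      have e2 : SA (m+1) W univ (t+1+1) = S (t+2) + W 0 * S (t+1) := by
        rw [show t+1+1 = (t+1)+1 from rfl, SA_decomp_succ]
        try simp [slice_univ, ← hW'def, ← hSdef]
      have e3 : SA (m+1) W A (t+1+1) = P (t+2) + W 0 * Q (t+1) := by
        rw [show t+1+1 = (t+1)+1 from rfl, SA_decomp_succ]
        try simp [← hW'def, ← hPdef, ← hQdef]
      have e4 : SA (m+1) W univ (t+1) = S (t+1) + W 0 * S t := by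
        rw [SA_decomp_succ]
        try simp [slice_univ, ← hW'def, ← hSdef]
      rw [e1, e2, e3, e4]
      -- goal : (P(t+1) + w Q t) * (S(t+2) + w S(t+1)) ≤ (P(t+2) + w Q(t+1)) * (S(t+1) + w S t)
      have hS1 : 0 < S (t+1) := ST_pos hW' (by omega)
      have hS0 : 0 < S t := ST_pos hW' (by omega)
      have lc : S t * S (t+2) ≤ S (t+1) ^ 2 := ST_logconcave hW' t
      have c1 : P (t+1) * S (t+2) ≤ P (t+2) * S (t+1) := cP (t+1)
      have c2 : Q t * S (t+1) ≤ Q (t+1) * S t := cQ t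
      have c3 : P (t+1) ≤ Q (t+1) := hPQ (t+1)
      by_cases hcase : Q t * S (t+1) ≤ P (t+1) * S t
      · -- case A
        -- Q t * S(t+2) * S(t+1) ≤ P(t+2) * S t * S(t+1)
        have key : Q t * S (t+2) ≤ P (t+2) * S t := by
          have h5 : Q t * S (t+2) * S (t+1) ≤ P (t+2) * S t * S (t+1) := by
            nlinarith [hSn (t+2), hSn t, hPn (t+1)]
          exact le_of_mul_le_mul_right h5 hS1
        nlinarith [mul_nonneg hw.le (mul_nonneg (sub_nonneg.mpr c3) hS1.le),
          mul_nonneg (mul_nonneg hw.le hw.le) (sub_nonneg.mpr c2),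
          mul_nonneg hw.le (sub_nonneg.mpr key)]
      · -- case B
        push_neg at hcase
        have hcB : P (t+1) * S t ≤ Q t * S (t+1) := hcase.le
        -- multiply goal by S t * S (t+1) > 0
        have key : (P (t+1) + W 0 * Q t) * (S (t+2) + W 0 * S (t+1)) * (S t * S (t+1))
            ≤ (P (t+2) + W 0 * Q (t+1)) * (S (t+1) + W 0 * S t) * (S t * S (t+1)) := by
          nlinarith [mul_nonneg (mul_nonneg (sub_nonneg.mpr c1) hS0.le)
              (mul_nonneg (add_nonneg hS1.le (mul_nonneg hw.le hS0.le)) (le_refl (0:ℝ))),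
            mul_nonneg (mul_nonneg (sub_nonneg.mpr c1) hS0.le)
              (add_nonneg hS1.le (mul_nonneg hw.le hS0.le)),
            mul_nonneg (mul_nonneg (mul_nonneg hw.le (sub_nonneg.mpr c2)) hS1.le)
              (add_nonneg hS1.le (mul_nonneg hw.le hS0.le)),
            mul_nonneg (mul_nonneg hw.le (sub_nonneg.mpr hcB)) (sub_nonneg.mpr lc)]
        exact le_of_mul_le_mul_right key (by positivity)

lemma ratio_step {m : ℕ} {W : Fin m → ℝ} (hW : ∀ i, 0 < W i)
    {A : Finset (Fin m → Bool)} (hA : IncrEvent A) {s : ℕ} (hs : s + 1 ≤ m) :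
    SA m W A s / SA m W univ s ≤ SA m W A (s+1) / SA m W univ (s+1) := by
  rw [div_le_div_iff₀ (ST_pos hW (by omega)) (ST_pos hW hs)]
  exact cross_step hW hA s

end NMaux

theorem stmt_19 (m : ℕ) (W : Fin m → ℝ) (hW : ∀ i, 0 < W i)
    (k l : ℕ) (hkl : k ≤ l)
    (hk : 0 < ∑ η : Fin m → Bool, if lvl η = k then prodWt W η else 0)
    (hl : 0 < ∑ η : Fin m → Bool, if lvl η = l then prodWt W η else 0)
    (A : Finset (Fin m → Bool)) (hA : IncrEvent A) :
    (∑ η ∈ A, if lvl η = k then prodWt W η else 0) /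
        (∑ η : Fin m → Bool, if lvl η = k then prodWt W η else 0)
      ≤ (∑ η ∈ A, if lvl η = l then prodWt W η else 0) /
        (∑ η : Fin m → Bool, if lvl η = l then prodWt W η else 0) := by
  have hl' : (NMaux.SA m W univ l) = ∑ η : Fin m → Bool, if lvl η = l then prodWt W η else 0 := rfl
  have hlm : l ≤ m := by
    by_contra h
    rw [← hl', NMaux.SA_eq_zero W univ (by omega)] at hl
    exact lt_irrefl 0 hl
  have main : ∀ j, k ≤ j → j ≤ m →
      NMaux.SA m W A k / NMaux.SA m W univ k ≤ NMaux.SA m W A j / NMaux.SA m W univ j := by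
    intro j hkj hjm
    induction j with
    | zero => 
      have : k = 0 := by omega
      subst this
      exact le_refl _
    | succ i ihi =>
      rcases Nat.lt_or_ge k (i+1) with h | h
      · exact le_trans (ihi (by omega) (by omega)) (NMaux.ratio_step hW hA hjm)
      · have : k = i + 1 := by omega
        subst this
        exact le_refl _
  exact main l hkl hlm
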